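/- (Verifiability of scheme Π1.) Fix prime p, distinct nonzero u1, u2 ∈ F_p, m, i ∈ [m], and database x ∈ (F_{p^t})^m. Let r, r_v ∈ (F_p)^m and v uniform on F_p \ {0} be the client's randomness, and let the honest answers be z_j = (e_i + r u_j)^T x, w_j = (v e_i + r_v u_j)^T x. For any adversary function A that, given (e_i + r u_1, v e_i + r_v u_1, x, i), outputs forged answers (ẑ1, ŵ1), the probability (over v, r, r_v) that the reconstructed value a ẑ1 + b z2 differs from x_i yet the verification equation v(a ẑ1 + b z2) = a ŵ1 + b w2 holds is at most 1/(p-1). -/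

import Mathlib

open Matrix in
/-- Verifiability of scheme Π1: any adversary controlling server 1 makes the
client accept a wrong value with probability at most 1/(p-1) over the client's
randomness (v, r, r_v). -/
theorem pi1_verifiable
    (p : ℕ) [Fact p.Prime] (K : Type*) [Field K] [Algebra (ZMod p) K] [DecidableEq K]
    (t m : ℕ) (u1 u2 a b : ZMod p) (hu : u1 ≠ u2) (hu1 : u1 ≠ 0) (hu2 : u2 ≠ 0)
    (hab : a = (!![1, u1; 1, u2] : Matrix (Fin 2) (Fin 2) (ZMod p))⁻¹ 0 0 ∧
           b = (!![1, u1; 1, u2] : Matrix (Fin 2) (Fin 2) (ZMod p))⁻¹ 0 1)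
    (i : Fin m) (x : Fin m → K)
    (A : (Fin m → ZMod p) → (Fin m → ZMod p) → K × K) :
    ((((Finset.univ \ {0} : Finset (ZMod p)) ×ˢ
        ((Finset.univ : Finset (Fin m → ZMod p)) ×ˢ
          (Finset.univ : Finset (Fin m → ZMod p)))).filter
        (fun ω =>
          let v := ω.1; let r := ω.2.1; let rv := ω.2.2
          let e : Fin m → ZMod p := fun l => if l = i then 1 else 0
          let ans := A (fun l => e l + r l * u1) (fun l => v * e l + rv l * u1)
          let z2 : K := ∑ l, algebraMap (ZMod p) K (e l + r l * u2) * x l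
          let w2 : K := ∑ l, algebraMap (ZMod p) K (v * e l + rv l * u2) * x l
          (algebraMap (ZMod p) K a * ans.1 + algebraMap (ZMod p) K b * z2 ≠ x i) ∧
          algebraMap (ZMod p) K v *
              (algebraMap (ZMod p) K a * ans.1 + algebraMap (ZMod p) K b * z2)
            = algebraMap (ZMod p) K a * ans.2 + algebraMap (ZMod p) K b * w2)).card : ℝ)
      / (((Finset.univ \ {0} : Finset (ZMod p)) ×ˢ
          ((Finset.univ : Finset (Fin m → ZMod p)) ×ˢ
            (Finset.univ : Finset (Fin m → ZMod p)))).card : ℝ)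
      ≤ 1 / (p - 1) := by
  obtain ⟨ha, hb⟩ := hab
  have halg : Function.Injective (algebraMap (ZMod p) K) := (algebraMap (ZMod p) K).injective
  have hsub : u2 - u1 ≠ 0 := sub_ne_zero.mpr (Ne.symm hu)
  have hbkey : b * (u1 - u2) = u1 := by
    have hdet : (!![1, u1; 1, u2] : Matrix (Fin 2) (Fin 2) (ZMod p)).det = u2 - u1 := by
      simp [Matrix.det_fin_two_of]
    rw [hb, Matrix.inv_def, hdet, Matrix.adjugate_fin_two_of]
    simp only [Matrix.smul_apply, Matrix.cons_val', Matrix.cons_val_zero,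
      Matrix.cons_val_one, Matrix.head_cons, Matrix.empty_val',
      Matrix.cons_val_fin_one, Ring.inverse_eq_inv', smul_eq_mul, Matrix.of_apply]
    field_simp
    ring
  set f := algebraMap (ZMod p) K with hf
  have hfu1 : f u1 ≠ 0 := fun h => hu1 (halg (by simpa using h))
  set bad := (((Finset.univ \ {0} : Finset (ZMod p)) ×ˢ
        ((Finset.univ : Finset (Fin m → ZMod p)) ×ˢ
          (Finset.univ : Finset (Fin m → ZMod p)))).filter
        (fun ω =>
          let v := ω.1; let r := ω.2.1; let rv := ω.2.2
          let e : Fin m → ZMod p := fun l => if l = i then 1 else 0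
          let ans := A (fun l => e l + r l * u1) (fun l => v * e l + rv l * u1)
          let z2 : K := ∑ l, f (e l + r l * u2) * x l
          let w2 : K := ∑ l, f (v * e l + rv l * u2) * x l
          (f a * ans.1 + f b * z2 ≠ x i) ∧
          f v * (f a * ans.1 + f b * z2) = f a * ans.2 + f b * w2)) with hbad
  -- the injection into query space
  set g : (ZMod p × ((Fin m → ZMod p) × (Fin m → ZMod p))) →
      ((Fin m → ZMod p) × (Fin m → ZMod p)) :=
    fun ω => ((fun l => (if l = i then 1 else 0) + ω.2.1 l * u1),
              (fun l => ω.1 * (if l = i then 1 else 0) + ω.2.2 l * u1)) with hg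
  have hinj : Set.InjOn g (bad : Set _) := by
    rintro ⟨v, r, rv⟩ h1 ⟨v', r', rv'⟩ h2 hgeq
    simp only [Finset.mem_coe, hbad, Finset.mem_filter] at h1 h2
    obtain ⟨-, hne1, hver1⟩ := h1
    obtain ⟨-, hne2, hver2⟩ := h2
    simp only [hg, Prod.mk.injEq] at hgeq
    obtain ⟨hq1, hq2⟩ := hgeq
    have hr : r = r' := by
      funext l
      have h := congrFun hq1 l
      exact mul_right_cancel₀ hu1 (add_left_cancel h)
    subst hr
    have hq2' : ∀ l, v * (if l = i then 1 else 0) + rv l * u1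
        = v' * (if l = i then 1 else 0) + rv' l * u1 := fun l => congrFun hq2 l
    rw [← hq2] at hver2 hne2
    -- per-term identity after multiplying by u1
    have hterm : ∀ l : Fin m,
        f u1 * (f (v * (if l = i then 1 else 0) + rv l * u2) * x l)
          - f u1 * (f (v' * (if l = i then 1 else 0) + rv' l * u2) * x l)
        = f ((v - v') * (u1 - u2)) * (f (if l = i then 1 else 0) * x l) := by
      intro l
      have hz : u1 * (v * (if l = i then 1 else 0) + rv l * u2)
          - u1 * (v' * (if l = i then 1 else 0) + rv' l * u2)
          = (v - v') * (u1 - u2) * (if l = i then 1 else 0) := by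
        linear_combination u2 * hq2' l
      rw [← mul_assoc, ← mul_assoc, ← _root_.map_mul, ← _root_.map_mul, ← sub_mul,
        ← _root_.map_sub, hz, _root_.map_mul, mul_assoc]
    have hsum : f u1 * ((∑ l, f (v * (if l = i then 1 else 0) + rv l * u2) * x l)
          - ∑ l, f (v' * (if l = i then 1 else 0) + rv' l * u2) * x l)
        = f ((v - v') * (u1 - u2)) * x i := by
      rw [mul_sub, Finset.mul_sum, Finset.mul_sum, ← Finset.sum_sub_distrib]
      simp_rw [hterm]
      rw [← Finset.mul_sum]
      congr 1
      simp [apply_ite f, ite_mul, Finset.sum_ite_eq']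
    have hmap : f ((v - v') * (u1 - u2)) * f b = f u1 * (f v - f v') := by
      rw [← _root_.map_sub, ← _root_.map_mul, ← _root_.map_mul]
      congr 1
      linear_combination (v - v') * hbkey
    have hv : v = v' := by
      have hkey : f u1 * ((f v - f v') *
          ((f a * (A (fun l => (if l = i then 1 else 0) + r l * u1)
              (fun l => v * (if l = i then 1 else 0) + rv l * u1)).1
            + f b * ∑ l, f ((if l = i then 1 else 0) + r l * u2) * x l) - x i)) = 0 := by
        linear_combination f u1 * hver1 - f u1 * hver2 + f b * hsum + x i * hmap
      have h2 := mul_eq_zero.mp hkey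
      rcases h2 with h | h
      · exact absurd h hfu1
      rcases mul_eq_zero.mp h with h' | h'
      · have : f v = f v' := sub_eq_zero.mp h'
        exact halg this
      · exact absurd (sub_eq_zero.mp h') hne1
    subst hv
    have hrv : rv = rv' := by
      funext l
      have h := hq2' l
      exact mul_right_cancel₀ hu1 (add_left_cancel h)
    subst hrv
    rfl
  -- counting
  have hble : bad.card ≤ Fintype.card (Fin m → ZMod p) * Fintype.card (Fin m → ZMod p) := by
    calc bad.card ≤ (Finset.univ : Finset ((Fin m → ZMod p) × (Fin m → ZMod p))).card :=
          Finset.card_le_card_of_injOn g (fun _ _ => Finset.mem_univ _) hinj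
      _ = _ := by rw [Finset.card_univ, Fintype.card_prod]
  have hDcard : (((Finset.univ \ {0} : Finset (ZMod p)) ×ˢ
      ((Finset.univ : Finset (Fin m → ZMod p)) ×ˢ
        (Finset.univ : Finset (Fin m → ZMod p)))).card)
      = (p - 1) * (Fintype.card (Fin m → ZMod p) * Fintype.card (Fin m → ZMod p)) := by
    rw [Finset.card_product, Finset.card_product, Finset.card_sdiff_of_subset (by simp)]
    simp [ZMod.card]
  have hp2 : 2 ≤ p := (Fact.out : p.Prime).two_le
  have hM : 0 < Fintype.card (Fin m → ZMod p) := Fintype.card_pos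
  rw [hDcard]
  have h1 : ((p - 1 : ℕ) : ℝ) = (p : ℝ) - 1 := by
    rw [Nat.cast_sub (by omega)]; norm_num
  rw [← h1]
  have hpos1 : (0:ℝ) < ((p - 1) * (Fintype.card (Fin m → ZMod p) * Fintype.card (Fin m → ZMod p)) : ℕ) := by
    have : 0 < (p - 1) * (Fintype.card (Fin m → ZMod p) * Fintype.card (Fin m → ZMod p)) := by
      apply Nat.mul_pos (by omega) (Nat.mul_pos hM hM)
    exact_mod_cast this
  have hpos2 : (0:ℝ) < ((p - 1 : ℕ) : ℝ) := by
    have : 0 < p - 1 := by omega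
    exact_mod_cast this
  rw [div_le_div_iff₀ hpos1 hpos2]
  push_cast
  have : (bad.card : ℝ) ≤ (Fintype.card (Fin m → ZMod p) : ℝ) * (Fintype.card (Fin m → ZMod p)) := by
    exact_mod_cast hble
  nlinarith [hpos2, this]
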